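/- Fix d ≥ 2 and distinct m₁, m₂ ∈ ℕ₀, and set ν_i = m_i + d/2 − 1. Then the set of σ ∈ ℝ for which the equations z J'_{ν₁}(z)/J_{ν₁}(z) = d/2 − 1 − σ and z J'_{ν₂}(z)/J_{ν₂}(z) = d/2 − 1 − σ possess a common positive root is at most countable. -/

import Mathlib

/-- The Bessel function of the first kind of (real) order `ν`,
`J_ν(z) = Σ_{k≥0} (-1)^k (z/2)^{2k+ν} / (k! Γ(k+ν+1))`. -/
noncomputable def besselJ (ν : ℝ) (z : ℝ) : ℝ :=
  ∑' k : ℕ, ((-1 : ℝ) ^ k / (Nat.factorial k * Real.Gamma (k + ν + 1))) *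
    (z / 2) ^ (2 * (k : ℝ) + ν)

/-- `z` is a positive root of the equation `z J'_ν(z)/J_ν(z) = c`, i.e. `z > 0`,
`J_ν(z) ≠ 0` and `z J'_ν(z) = c J_ν(z)`. -/
def IsPosRobinBesselRoot (ν c z : ℝ) : Prop :=
  0 < z ∧ besselJ ν z ≠ 0 ∧ z * deriv (besselJ ν) z = c * besselJ ν z

open Filter Topology FormalMultilinearSeries ENNReal

/-- Taylor coefficients of the "analytic part" of the Bessel function. -/
noncomputable def besselA (ν : ℝ) (k : ℕ) : ℝ :=
  (-1 : ℝ) ^ k / (Nat.factorial k * Real.Gamma (k + ν + 1))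

lemma besselA_abs {ν : ℝ} (hν : 0 ≤ ν) (k : ℕ) :
    ‖besselA ν k‖ = ((Nat.factorial k : ℝ) * Real.Gamma (k + ν + 1))⁻¹ := by
  have h1 : (0:ℝ) < Real.Gamma (k + ν + 1) :=
    Real.Gamma_pos_of_pos (by positivity)
  have h2 : (0:ℝ) < (Nat.factorial k : ℝ) := by positivity
  rw [besselA, norm_div, norm_pow, norm_neg, norm_one, one_pow, one_div,
    Real.norm_eq_abs, abs_of_pos (by positivity)]

lemma besselA_ne_zero {ν : ℝ} (hν : 0 ≤ ν) (k : ℕ) : besselA ν k ≠ 0 := by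
  have h1 : (0:ℝ) < Real.Gamma (k + ν + 1) :=
    Real.Gamma_pos_of_pos (by positivity)
  have h2 : (0:ℝ) < (Nat.factorial k : ℝ) := by positivity
  rw [besselA]
  exact div_ne_zero (pow_ne_zero _ (by norm_num)) (by positivity)

lemma besselA_radius {ν : ℝ} (hν : 0 ≤ ν) :
    (FormalMultilinearSeries.ofScalars ℝ (besselA ν)).radius = ⊤ := by
  apply FormalMultilinearSeries.ofScalars_radius_eq_top_of_tendsto
  · exact Filter.Eventually.of_forall (besselA_ne_zero hν)
  · have key : ∀ k : ℕ, ‖besselA ν (k+1)‖ / ‖besselA ν k‖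
        = (((k:ℝ)+1) * ((k:ℝ) + ν + 1))⁻¹ := by
      intro k
      have h1 : (0:ℝ) < Real.Gamma (k + ν + 1) :=
        Real.Gamma_pos_of_pos (by positivity)
      have hne : ((k:ℝ) + ν + 1) ≠ 0 := by positivity
      have hrec : Real.Gamma ((k+1:ℕ) + ν + 1) = ((k:ℝ) + ν + 1) * Real.Gamma (k + ν + 1) := by
        have : ((k+1:ℕ) : ℝ) + ν + 1 = ((k:ℝ) + ν + 1) + 1 := by push_cast; ring
        rw [this, Real.Gamma_add_one hne]
      rw [besselA_abs hν, besselA_abs hν, hrec, Nat.factorial_succ]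
      have h2 : (0:ℝ) < (Nat.factorial k : ℝ) := by positivity
      push_cast
      field_simp
    simp only [key]
    apply Tendsto.comp tendsto_inv_atTop_zero
    apply Tendsto.atTop_mul_atTop₀
    · exact tendsto_atTop_add_const_right _ _ tendsto_natCast_atTop_atTop
    · apply tendsto_atTop_add_const_right
      exact tendsto_atTop_add_const_right _ _ tendsto_natCast_atTop_atTop

/-- The analytic part of the Bessel function: `J_ν(z) = G_ν(z/2) * (z/2)^ν`. -/
noncomputable def besselG (ν : ℝ) (x : ℝ) : ℝ :=
  FormalMultilinearSeries.ofScalarsSum (E := ℝ) (besselA ν) (x ^ 2)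

lemma besselG_eq_tsum (ν x : ℝ) : besselG ν x = ∑' k : ℕ, besselA ν k * x ^ (2 * k) := by
  rw [besselG, ofScalars_sum_eq]
  exact tsum_congr fun k => by rw [smul_eq_mul, pow_mul]

lemma analyticOnNhd_besselG {ν : ℝ} (hν : 0 ≤ ν) :
    AnalyticOnNhd ℝ (besselG ν) Set.univ := by
  intro x _
  have h0 : (0:ℝ≥0∞) < (FormalMultilinearSeries.ofScalars ℝ (besselA ν)).radius := by
    rw [besselA_radius hν]; exact ENNReal.zero_lt_top
  have hsum := (FormalMultilinearSeries.ofScalars ℝ (besselA ν)).hasFPowerSeriesOnBall h0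
  have h1 : AnalyticAt ℝ (FormalMultilinearSeries.ofScalarsSum (E := ℝ) (besselA ν)) (x ^ 2) := by
    apply hsum.analyticAt_of_mem
    rw [besselA_radius hν]
    simp [EMetric.mem_ball]
  have hg : AnalyticAt ℝ (fun y : ℝ => y ^ 2) x :=
    (analyticAt_id : AnalyticAt ℝ _root_.id x).pow 2
  exact AnalyticAt.comp (f := fun y : ℝ => y ^ 2) h1 hg

lemma besselG_zero (ν : ℝ) : besselG ν 0 = 1 / Real.Gamma (ν + 1) := by
  rw [besselG_eq_tsum]
  rw [tsum_eq_single 0]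
  · simp [besselA]
  · intro k hk
    have : 2 * k ≠ 0 := by omega
    simp [this]

lemma besselJ_eq {ν : ℝ} (z : ℝ) (hz : 0 < z) :
    besselJ ν z = besselG ν (z / 2) * (z / 2) ^ ν := by
  have hx : (0:ℝ) < z / 2 := by linarith
  rw [besselG_eq_tsum, ← tsum_mul_right, besselJ]
  apply tsum_congr
  intro k
  rw [show (2 * (k:ℝ) + ν) = ((2*k : ℕ) : ℝ) + ν by push_cast; ring,
    Real.rpow_add hx, Real.rpow_natCast, besselA, mul_assoc]

lemma besselJ_deriv {ν : ℝ} (hν : 0 ≤ ν) (z : ℝ) (hz : 0 < z) :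
    deriv (besselJ ν) z =
      deriv (besselG ν) (z / 2) * (1 / 2) * (z / 2) ^ ν
        + besselG ν (z / 2) * (ν * (z / 2) ^ (ν - 1) * (1 / 2)) := by
  have hEq : besselJ ν =ᶠ[𝓝 z] fun w => besselG ν (w / 2) * (w / 2) ^ ν := by
    filter_upwards [IsOpen.mem_nhds isOpen_Ioi hz] with w hw
    exact besselJ_eq w hw
  rw [hEq.deriv_eq]
  have hhalf : HasDerivAt (fun w : ℝ => w / 2) (1 / 2) z := (hasDerivAt_id z).div_const 2
  have hGdiff : HasDerivAt (besselG ν) (deriv (besselG ν) (z / 2)) (z / 2) :=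
    ((analyticOnNhd_besselG hν (z / 2) trivial).differentiableAt).hasDerivAt
  have h1 : HasDerivAt (fun w : ℝ => besselG ν (w / 2))
      (deriv (besselG ν) (z / 2) * (1 / 2)) z := HasDerivAt.comp (h₂ := besselG ν) (h := fun w : ℝ => w / 2) z hGdiff hhalf
  have hrpow : HasDerivAt (fun x : ℝ => x ^ ν) (ν * (z / 2) ^ (ν - 1)) (z / 2) :=
    Real.hasDerivAt_rpow_const (Or.inl (by positivity))
  have h2 : HasDerivAt (fun w : ℝ => (w / 2) ^ ν) (ν * (z / 2) ^ (ν - 1) * (1 / 2)) z :=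
    HasDerivAt.comp (h₂ := fun x : ℝ => x ^ ν) (h := fun w : ℝ => w / 2) z hrpow hhalf
  exact (h1.mul h2).deriv

lemma countable_zeros {h : ℝ → ℝ} (hA : AnalyticOnNhd ℝ h Set.univ) (x₀ : ℝ)
    (hx₀ : h x₀ ≠ 0) : {x : ℝ | h x = 0}.Countable := by
  set Z := {x : ℝ | h x = 0} with hZ
  have hiso : ∀ x : ℝ, ∀ᶠ y in 𝓝[≠] x, h y ≠ 0 := by
    intro x
    rcases (hA x trivial).eventually_eq_zero_or_eventually_ne_zero with h0 | h1
    · exact absurd (hA.eqOn_zero_of_preconnected_of_eventuallyEq_zero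
        isPreconnected_univ (Set.mem_univ x) h0 (Set.mem_univ x₀)) hx₀
    · exact h1
  have hdisc : DiscreteTopology Z := by
    rw [discreteTopology_subtype_iff]
    intro x hx
    have hempty : {y | h y ≠ 0} ∩ Z = ∅ := by
      ext y; simp [hZ]
    rw [← Filter.empty_mem_iff_bot, ← hempty]
    exact Filter.inter_mem_inf (hiso x) (Filter.mem_principal_self Z)
  exact (HereditarilyLindelof_LindelofSets Z).countable hdisc

/-- The analytic "cross-Wronskian" whose zeros control common Robin-Bessel roots. -/
noncomputable def besselH (ν₁ ν₂ : ℝ) (x : ℝ) : ℝ :=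
  (ν₁ - ν₂) / 2 * (besselG ν₁ x * besselG ν₂ x)
    + x / 2 * (deriv (besselG ν₁) x * besselG ν₂ x - deriv (besselG ν₂) x * besselG ν₁ x)

lemma analyticOnNhd_besselH {ν₁ ν₂ : ℝ} (h₁ : 0 ≤ ν₁) (h₂ : 0 ≤ ν₂) :
    AnalyticOnNhd ℝ (besselH ν₁ ν₂) Set.univ := by
  have g₁ := analyticOnNhd_besselG h₁
  have g₂ := analyticOnNhd_besselG h₂
  have d₁ := g₁.deriv
  have d₂ := g₂.deriv
  intro x hx
  exact ((analyticAt_const.mul ((g₁ x hx).mul (g₂ x hx)))).add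
    ((((analyticAt_id : AnalyticAt ℝ _root_.id x).div analyticAt_const (by norm_num)).mul
      (((d₁ x hx).mul (g₂ x hx)).sub ((d₂ x hx).mul (g₁ x hx)))))

lemma besselH_zero_ne {ν₁ ν₂ : ℝ} (h₁ : 0 ≤ ν₁) (h₂ : 0 ≤ ν₂) (hne : ν₁ ≠ ν₂) :
    besselH ν₁ ν₂ 0 ≠ 0 := by
  have hg₁ : besselG ν₁ 0 = 1 / Real.Gamma (ν₁ + 1) := besselG_zero ν₁
  have hg₂ : besselG ν₂ 0 = 1 / Real.Gamma (ν₂ + 1) := besselG_zero ν₂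
  have hp₁ : (0:ℝ) < Real.Gamma (ν₁ + 1) := Real.Gamma_pos_of_pos (by linarith)
  have hp₂ : (0:ℝ) < Real.Gamma (ν₂ + 1) := Real.Gamma_pos_of_pos (by linarith)
  have hd : ν₁ - ν₂ ≠ 0 := sub_ne_zero_of_ne hne
  simp only [besselH, hg₁, hg₂]
  rw [zero_div, zero_mul, add_zero]
  positivity

/-- If `z` is a common positive Robin root for orders `ν₁, ν₂`, then `besselH ν₁ ν₂ (z/2) = 0`. -/
lemma besselH_eq_zero_of_common_root {ν₁ ν₂ c z : ℝ} (h₁ : 0 ≤ ν₁) (h₂ : 0 ≤ ν₂)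
    (hr₁ : IsPosRobinBesselRoot ν₁ c z) (hr₂ : IsPosRobinBesselRoot ν₂ c z) :
    besselH ν₁ ν₂ (z / 2) = 0 := by
  obtain ⟨hz, hJ₁, hE₁⟩ := hr₁
  obtain ⟨-, hJ₂, hE₂⟩ := hr₂
  have hx : (0:ℝ) < z / 2 := by linarith
  -- cross-multiplied equality
  have hcross : deriv (besselJ ν₁) z * besselJ ν₂ z = deriv (besselJ ν₂) z * besselJ ν₁ z := by
    have h1 : z * (deriv (besselJ ν₁) z * besselJ ν₂ z)
        = z * (deriv (besselJ ν₂) z * besselJ ν₁ z) := by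
      calc z * (deriv (besselJ ν₁) z * besselJ ν₂ z)
          = (z * deriv (besselJ ν₁) z) * besselJ ν₂ z := by ring
        _ = (c * besselJ ν₁ z) * besselJ ν₂ z := by rw [hE₁]
        _ = (c * besselJ ν₂ z) * besselJ ν₁ z := by ring
        _ = (z * deriv (besselJ ν₂) z) * besselJ ν₁ z := by rw [hE₂]
        _ = z * (deriv (besselJ ν₂) z * besselJ ν₁ z) := by ring
    exact mul_left_cancel₀ (ne_of_gt hz) h1
  set x := z / 2 with hxdef
  set G₁ := besselG ν₁ x
  set G₂ := besselG ν₂ x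
  set D₁ := deriv (besselG ν₁) x
  set D₂ := deriv (besselG ν₂) x
  set A := x ^ (ν₁ - 1) with hA
  set B := x ^ (ν₂ - 1) with hB
  have hApos : 0 < A := Real.rpow_pos_of_pos hx _
  have hBpos : 0 < B := Real.rpow_pos_of_pos hx _
  have hu : x ^ ν₁ = A * x := by
    rw [hA, ← Real.rpow_add_one (ne_of_gt hx)]; ring_nf
  have hv : x ^ ν₂ = B * x := by
    rw [hB, ← Real.rpow_add_one (ne_of_gt hx)]; ring_nf
  rw [besselJ_deriv h₁ z hz, besselJ_deriv h₂ z hz, besselJ_eq z hz, besselJ_eq z hz] at hcross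
  rw [← hxdef, hu, hv] at hcross
  have key : A * B * x * besselH ν₁ ν₂ x = 0 := by
    simp only [besselH]
    linear_combination hcross
  have hABx : A * B * x ≠ 0 := by positivity
  exact (mul_eq_zero.mp key).resolve_left hABx

/-- Fix `d ≥ 2` and distinct `m₁, m₂ ∈ ℕ₀`, and set `ν_i = m_i + d/2 - 1`.
The set of `σ ∈ ℝ` for which the equations `z J'_{ν₁}(z)/J_{ν₁}(z) = d/2 - 1 - σ` and
`z J'_{ν₂}(z)/J_{ν₂}(z) = d/2 - 1 - σ` have a common positive root is at most countable. -/
theorem countable_bad_sigma (d : ℕ) (hd : 2 ≤ d) (m₁ m₂ : ℕ) (hm : m₁ ≠ m₂) :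
    {σ : ℝ | ∃ z : ℝ,
        IsPosRobinBesselRoot ((m₁ : ℝ) + d / 2 - 1) ((d : ℝ) / 2 - 1 - σ) z ∧
        IsPosRobinBesselRoot ((m₂ : ℝ) + d / 2 - 1) ((d : ℝ) / 2 - 1 - σ) z}.Countable := by
  set ν₁ : ℝ := (m₁ : ℝ) + d / 2 - 1 with hν₁def
  set ν₂ : ℝ := (m₂ : ℝ) + d / 2 - 1 with hν₂def
  have hdge : (1:ℝ) ≤ (d:ℝ) / 2 := by
    have : (2:ℝ) ≤ (d:ℝ) := by exact_mod_cast hd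
    linarith
  have h₁ : 0 ≤ ν₁ := by
    have : (0:ℝ) ≤ (m₁:ℝ) := Nat.cast_nonneg m₁
    rw [hν₁def]; linarith
  have h₂ : 0 ≤ ν₂ := by
    have : (0:ℝ) ≤ (m₂:ℝ) := Nat.cast_nonneg m₂
    rw [hν₂def]; linarith
  have hne : ν₁ ≠ ν₂ := by
    rw [hν₁def, hν₂def]
    intro h
    exact hm (Nat.cast_injective (by linarith : (m₁:ℝ) = (m₂:ℝ)))
  set S := {σ : ℝ | ∃ z : ℝ,
      IsPosRobinBesselRoot ν₁ ((d : ℝ) / 2 - 1 - σ) z ∧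
      IsPosRobinBesselRoot ν₂ ((d : ℝ) / 2 - 1 - σ) z} with hS
  have hZc : {x : ℝ | besselH ν₁ ν₂ x = 0}.Countable :=
    countable_zeros (analyticOnNhd_besselH h₁ h₂) 0 (besselH_zero_ne h₁ h₂ hne)
  -- map each bad σ to (a chosen common root)/2
  classical
  set f : ℝ → ℝ := fun σ => if hσ : σ ∈ S then (Classical.choose hσ) / 2 else 0 with hf
  have hmaps : Set.MapsTo f S {x : ℝ | besselH ν₁ ν₂ x = 0} := by
    intro σ hσ
    have hspec := Classical.choose_spec hσ
    simp only [hf, dif_pos hσ]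
    exact besselH_eq_zero_of_common_root h₁ h₂ hspec.1 hspec.2
  have hinj : Set.InjOn f S := by
    intro σ hσ σ' hσ' hff
    have hspec := Classical.choose_spec hσ
    have hspec' := Classical.choose_spec hσ'
    simp only [hf, dif_pos hσ, dif_pos hσ'] at hff
    have hzz : Classical.choose hσ = Classical.choose hσ' := by linarith
    set z := Classical.choose hσ with hzdef
    obtain ⟨hz, hJ, hE⟩ := hspec.1
    obtain ⟨-, -, hE'⟩ := hspec'.1
    rw [← hzz] at hE'
    -- z * deriv J z = c σ * J z = c σ' * J z, J z ≠ 0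
    have : ((d : ℝ) / 2 - 1 - σ) * besselJ ν₁ z = ((d : ℝ) / 2 - 1 - σ') * besselJ ν₁ z := by
      rw [← hE, ← hE']
    have := mul_right_cancel₀ hJ this
    linarith
  exact hmaps.countable_of_injOn hinj hZc
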